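/- arXiv:1107.0343 — 3 statements merged into one kernel-verified Lean document; each statement's English description precedes it below -/
import Mathlib

section
/- A vector U satisfying Kirchhoff's equations at all interior nodes of a resistor network with positive conductances (i.e., for each interior node i, Σ_j γ_{ij}(U_j - U_i) = 0 over neighbors j) attains its maximum and minimum values at boundary nodes, provided every interior node is connected to the boundary by a path in the graph. -/
lemma dmp_aux {V : Type*} [Fintype V] [DecidableEq V]
    (Adj : V → V → Prop) [DecidableRel Adj]
    (γ : V → V → ℝ) (hγ : ∀ i j, Adj i j → 0 < γ i j)
    (boundary : V → Prop) [DecidablePred boundary]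
    (hbne : ∃ v, boundary v)
    (hconn : ∀ i, ¬ boundary i → ∃ b, boundary b ∧ Relation.ReflTransGen Adj i b)
    (U : V → ℝ)
    (hU : ∀ i, ¬ boundary i →
      ∑ j ∈ Finset.univ.filter (fun j => Adj i j), γ i j * (U j - U i) = 0) :
    ∃ b, boundary b ∧ ∀ i, U i ≤ U b := by
  obtain ⟨v0, hv0⟩ := hbne
  obtain ⟨i, -, hi⟩ := Finset.exists_max_image Finset.univ U ⟨v0, Finset.mem_univ v0⟩
  simp only [Finset.mem_univ, forall_true_left] at hi
  -- key: a node at the max, if interior, has all neighbors at the max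
  have key : ∀ a, ¬ boundary a → U a = U i → ∀ c, Adj a c → U c = U a := by
    intro a ha hUa c hc
    have hsum := hU a ha
    have hnonpos : ∀ j ∈ Finset.univ.filter (fun j => Adj a j),
        γ a j * (U j - U a) ≤ 0 := by
      intro j hj
      rw [Finset.mem_filter] at hj
      have := hγ a j hj.2
      nlinarith [hi j]
    have := (Finset.sum_eq_zero_iff_of_nonpos hnonpos).mp hsum c
      (Finset.mem_filter.mpr ⟨Finset.mem_univ c, hc⟩)
    have hg := hγ a c hc
    nlinarith
  -- propagate along paths
  have prop : ∀ a b, Relation.ReflTransGen Adj a b → boundary b →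
      U a = U i → ∃ bb, boundary bb ∧ U bb = U i := by
    intro a b hab hb
    induction hab using Relation.ReflTransGen.head_induction_on with
    | refl => intro h; exact ⟨b, hb, h⟩
    | head hac hcb ih =>
      rename_i x c
      intro hx
      by_cases hbx : boundary x
      · exact ⟨x, hbx, hx⟩
      · exact ih ((key x hbx hx c hac).trans hx)
  by_cases hbi : boundary i
  · exact ⟨i, hbi, hi⟩
  · obtain ⟨b, hb, hpath⟩ := hconn i hbi
    obtain ⟨bb, hbb, hUbb⟩ := prop i b hpath hb rfl
    exact ⟨bb, hbb, fun j => hUbb ▸ hi j⟩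

/-- Discrete maximum principle: a potential satisfying Kirchhoff's equations
(with positive conductances) at every interior node of a finite network, each
interior node being connected to the boundary by a path, attains its maximum
and minimum at boundary nodes. -/
theorem discrete_maximum_principle {V : Type*} [Fintype V] [DecidableEq V]
    (Adj : V → V → Prop) [DecidableRel Adj] (hAdj : Symmetric Adj)
    (γ : V → V → ℝ) (hγ : ∀ i j, Adj i j → 0 < γ i j)
    (boundary : V → Prop) [DecidablePred boundary]
    (hbne : ∃ v, boundary v)
    (hconn : ∀ i, ¬ boundary i → ∃ b, boundary b ∧ Relation.ReflTransGen Adj i b)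
    (U : V → ℝ)
    (hU : ∀ i, ¬ boundary i →
      ∑ j ∈ Finset.univ.filter (fun j => Adj i j), γ i j * (U j - U i) = 0) :
    ∃ bmax bmin, boundary bmax ∧ boundary bmin ∧
      ∀ i, U i ≤ U bmax ∧ U bmin ≤ U i := by
  obtain ⟨bmax, hbmax, hmax⟩ := dmp_aux Adj γ hγ boundary hbne hconn U hU
  obtain ⟨bmin, hbmin, hmin⟩ := dmp_aux Adj γ hγ boundary hbne hconn (fun v => -U v)
    (by
      intro i hi
      have := hU i hi
      calc ∑ j ∈ Finset.univ.filter (fun j => Adj i j), γ i j * (-U j - -U i)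
          = -∑ j ∈ Finset.univ.filter (fun j => Adj i j), γ i j * (U j - U i) := by
            rw [← Finset.sum_neg_distrib]; apply Finset.sum_congr rfl; intro j _; ring
        _ = 0 := by rw [this, neg_zero])
  exact ⟨bmax, bmin, hbmax, hbmin, fun i => ⟨hmax i, by have := hmin i; simpa using this⟩⟩
end

section
/- For integer k with |k| ≤ (n-1)/2 and n odd, the scaled eigenvalue factor satisfies 2/π < sinc(π(1-1/n)/2) ≤ |sinc(kh_θ/2)| ≤ 1, where h_θ = 2π/n and sinc(x) = sin(x)/x (with sinc(0)=1). -/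
/-- `sinc x = sin x / x`, with `sinc 0 = 1`. -/
noncomputable def sinc (x : ℝ) : ℝ := if x = 0 then 1 else Real.sin x / x

open Real hiding sinc

lemma sinc_le_one {x : ℝ} (hx : 0 ≤ x) : sinc x ≤ 1 := by
  unfold sinc
  split
  · exact le_refl 1
  · next h =>
    have hx' : 0 < x := lt_of_le_of_ne hx (Ne.symm h)
    rw [div_le_one hx']
    exact Real.sin_le hx

lemma sinc_anti {x y : ℝ} (hx : 0 ≤ x) (hxy : x ≤ y) (hy : y ≤ π) :
    sinc y ≤ sinc x := by
  rcases eq_or_lt_of_le hx with h0 | h0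
  · rw [← h0]
    have : sinc 0 = 1 := by simp [sinc]
    rw [this]
    exact sinc_le_one (by linarith)
  rcases eq_or_lt_of_le hxy with rfl | hxy'
  · exact le_refl _
  have hy0 : 0 < y := lt_trans h0 hxy'
  unfold sinc
  rw [if_neg (ne_of_gt h0), if_neg (ne_of_gt hy0), div_le_div_iff₀ hy0 h0]
  -- sin y * x ≤ sin x * y
  have hc := strictConcaveOn_sin_Icc.concaveOn
  have hmem0 : (0 : ℝ) ∈ Set.Icc 0 π := ⟨le_refl _, Real.pi_pos.le⟩
  have hmemy : y ∈ Set.Icc 0 π := ⟨hy0.le, hy⟩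
  have ha : (0:ℝ) ≤ 1 - x / y := by
    have : x / y ≤ 1 := (div_le_one hy0).2 hxy
    linarith
  have hb : (0:ℝ) ≤ x / y := by positivity
  have hab : (1 - x / y) + x / y = 1 := by ring
  have hxeq : x / y * y = x := div_mul_cancel₀ x (ne_of_gt hy0)
  have hyne : y ≠ 0 := ne_of_gt hy0
  calc Real.sin y * x = x / y * Real.sin y * y := by field_simp
    _ ≤ Real.sin x * y := by
        have h1 : x / y * Real.sin y ≤ Real.sin x := by
          have := hc.2 hmem0 hmemy ha hb hab
          simp only [smul_eq_mul, mul_zero, Real.sin_zero, zero_add] at this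
          rwa [hxeq] at this
        exact mul_le_mul_of_nonneg_right h1 hy0.le

lemma abs_sinc {x : ℝ} (hx : |x| ≤ π) : |sinc x| = sinc |x| := by
  rcases eq_or_ne x 0 with rfl | h
  · simp [sinc]
  have hx0 : |x| ≠ 0 := abs_ne_zero.mpr h
  unfold sinc
  rw [if_neg h, if_neg hx0, abs_div]
  congr 1
  have h1 : |Real.sin x| = |Real.sin (|x|)| := by
    rcases abs_choice x with h' | h'
    · rw [h']
    · rw [h', Real.sin_neg, abs_neg]
  rw [h1, abs_of_nonneg (Real.sin_nonneg_of_nonneg_of_le_pi (abs_nonneg x) hx)]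

/-- For odd `n` and integer `k` with `|k| ≤ (n-1)/2`, with `h_θ = 2π/n`, one has
`2/π < sinc(π(1-1/n)/2) ≤ |sinc(k h_θ/2)| ≤ 1`. -/
theorem sinc_factor_bounds (n : ℕ) (hn : 0 < n) (hodd : Odd n)
    (k : ℤ) (hk : 2 * |k| ≤ (n : ℤ) - 1)
    (hθ : ℝ) (hhθ : hθ = 2 * Real.pi / n) :
    2 / Real.pi < sinc (Real.pi * (1 - 1 / n) / 2) ∧
      sinc (Real.pi * (1 - 1 / n) / 2) ≤ |sinc ((k : ℝ) * hθ / 2)| ∧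
      |sinc ((k : ℝ) * hθ / 2)| ≤ 1 := by
  have hpi := Real.pi_pos
  have hn' : (0:ℝ) < n := by exact_mod_cast hn
  have hn1 : (1:ℝ) ≤ n := by exact_mod_cast hn
  set a := Real.pi * (1 - 1 / (n:ℝ)) / 2 with ha
  have ha0 : 0 ≤ a := by
    have : 1 / (n:ℝ) ≤ 1 := by
      rw [div_le_one hn']; exact hn1
    have h1 : 0 ≤ 1 - 1/(n:ℝ) := by linarith
    positivity
  have halt : a < π / 2 := by
    have : 0 < 1 / (n:ℝ) := by positivity
    rw [ha, div_lt_div_iff₀ (by norm_num : (0:ℝ) < 2) (by norm_num : (0:ℝ) < 2)]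
    nlinarith
  have hale : a ≤ π := by linarith
  -- the point
  set x := (k:ℝ) * hθ / 2 with hxdef
  have hxval : x = (k:ℝ) * Real.pi / n := by
    rw [hxdef, hhθ]; field_simp
  have habsx : |x| = |(k:ℝ)| * Real.pi / n := by
    rw [hxval, abs_div, abs_mul, abs_of_pos hpi, abs_of_pos hn']
  have hkr : 2 * |(k:ℝ)| ≤ (n:ℝ) - 1 := by exact_mod_cast hk
  have hxa : |x| ≤ a := by
    rw [habsx, ha, div_le_div_iff₀ hn' (by norm_num : (0:ℝ) < 2)]
    have h1n : Real.pi * (1 - 1/(n:ℝ)) * n = Real.pi * ((n:ℝ) - 1) := by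
      field_simp
    rw [h1n]
    nlinarith [hkr, hpi, abs_nonneg (k:ℝ)]
  have hxpi : |x| ≤ π := le_trans hxa hale
  have habs : |sinc x| = sinc |x| := abs_sinc hxpi
  refine ⟨?_, ?_, ?_⟩
  · -- 2/π < sinc a
    rcases eq_or_lt_of_le ha0 with h0 | h0
    · rw [← h0]
      have : sinc 0 = 1 := by simp [sinc]
      rw [this, div_lt_one hpi]
      linarith [Real.pi_gt_three]
    · have hj := Real.mul_lt_sin h0 halt
      unfold sinc
      rw [if_neg (ne_of_gt h0), lt_div_iff₀ h0]
      linarith [hj]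
  · rw [habs]
    exact sinc_anti (abs_nonneg x) hxa hale
  · rw [habs]
    exact sinc_le_one (abs_nonneg x)
end

section
/- With the matrix Λ_γ of the previous statement (entries (Λ_γ)_{p,q} = (1/2π) Σ_k e^{ik(θ_p-θ_q)} f(k²) sinc²(kh_θ/2) for all p,q), the vectors [e^{ikθ}] = (e^{ikθ_1},...,e^{ikθ_n})^T for |k| ≤ (n-1)/2 are eigenvectors: Λ_γ [e^{ikθ}] = (1/h_θ) F̃(ω_k²) [e^{ikθ}] with F̃(ω_k²) = Σ_{m ≡ k mod n} f(m²) sinc²(m h_θ/2); in particular, when f(m²) sinc²(mh_θ/2) vanishes for |m| > (n-1)/2, the eigenvalue is f(k²)sinc²(kh_θ/2)/h_θ. -/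
lemma sinc_sq_le_one (x : ℝ) : sinc x ^ 2 ≤ 1 := by
  unfold sinc
  split_ifs with hx
  · norm_num
  · rw [div_pow, div_le_one (by positivity)]
    exact Real.sin_sq_le_sq

lemma sq_mul_sinc_sq_le_one (x : ℝ) : x ^ 2 * sinc x ^ 2 ≤ 1 := by
  unfold sinc
  split_ifs with hx
  · subst hx; norm_num
  · rw [div_pow, mul_comm, div_mul_cancel₀ _ (pow_ne_zero 2 hx)]
    exact Real.sin_sq_le_one x

/-- The matrix `(Λ_γ)_{p,q} = (1/2π) Σ_k e^{ik(θ_p-θ_q)} f(k²) sinc²(kh/2)` has the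
sampled harmonics `(e^{ikθ_p})_p`, `|k| ≤ (n-1)/2`, as eigenvectors, with eigenvalue
`(1/h) F̃(ω_k²)`, `F̃(ω_k²) = Σ_{m ≡ k (n)} f(m²) sinc²(mh/2)`; in particular, when
`f(m²)sinc²(mh/2)` vanishes for `|m| > (n-1)/2`, the eigenvalue is
`f(k²)sinc²(kh/2)/h`. -/
theorem electrode_dtn_eigenvectors (n : ℕ) (hn : 0 < n) (hodd : Odd n)
    (f : ℕ → ℝ)
    (hf : Summable fun k : ℤ => |f (k.natAbs ^ 2)| / ((k : ℝ) ^ 2 + 1))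
    (h : ℝ) (hh : h = 2 * Real.pi / n)
    (θ : Fin n → ℝ) (hθ : ∀ p, θ p = 2 * Real.pi * ((p : ℕ) : ℝ) / n)
    (M : Matrix (Fin n) (Fin n) ℂ)
    (hM : M = Matrix.of fun (p q : Fin n) =>
      (1 / (2 * Real.pi) : ℂ) * ∑' m : ℤ,
        Complex.exp (Complex.I * m * (θ p - θ q)) *
          (f (m.natAbs ^ 2) : ℂ) * ((sinc ((m : ℝ) * h / 2) : ℝ) : ℂ) ^ 2)
    (k : ℤ) (hk : 2 * |k| ≤ (n : ℤ) - 1)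
    (v : Fin n → ℂ) (hv : v = fun p => Complex.exp (Complex.I * k * (θ p))) :
    M.mulVec v = ((1 / (h : ℂ)) * ∑' j : ℤ,
        (f ((k + n * j).natAbs ^ 2) : ℂ) *
          ((sinc (((k + n * j : ℤ) : ℝ) * h / 2) : ℝ) : ℂ) ^ 2) • v ∧
      ((∀ m : ℤ, (n : ℤ) - 1 < 2 * |m| →
          f (m.natAbs ^ 2) * (sinc ((m : ℝ) * h / 2)) ^ 2 = 0) →
        M.mulVec v =
          ((f (k.natAbs ^ 2) * (sinc ((k : ℝ) * h / 2)) ^ 2 / h : ℝ) : ℂ) • v) := by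
  have hnR : (0:ℝ) < n := by exact_mod_cast hn
  have hπ := Real.pi_pos
  have hh0 : 0 < h := by rw [hh]; positivity
  set c : ℤ → ℂ := fun m => (f (m.natAbs ^ 2) : ℂ) * ((sinc ((m : ℝ) * h / 2) : ℝ) : ℂ) ^ 2
    with hc_def
  -- norm of c
  have hcnorm : ∀ m : ℤ, ‖c m‖ = |f (m.natAbs ^ 2)| * sinc ((m : ℝ) * h / 2) ^ 2 := by
    intro m
    rw [hc_def]
    simp only [norm_mul, Complex.norm_real, norm_pow, Real.norm_eq_abs, sq_abs]
  -- summability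
  have hbound : ∀ m : ℤ, ‖c m‖ ≤ (1 + 4 / h ^ 2) * (|f (m.natAbs ^ 2)| / ((m : ℝ) ^ 2 + 1)) := by
    intro m
    rw [hcnorm m]
    have e : (1 + 4 / h ^ 2) * (|f (m.natAbs ^ 2)| / ((m : ℝ) ^ 2 + 1))
        = (1 + 4 / h ^ 2) * |f (m.natAbs ^ 2)| / ((m : ℝ) ^ 2 + 1) := by ring
    rw [e, le_div_iff₀ (by positivity : (0:ℝ) < (m:ℝ)^2 + 1)]
    have h1 : sinc ((m:ℝ) * h / 2) ^ 2 ≤ 1 := sinc_sq_le_one _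
    have h2 : ((m:ℝ) * h / 2) ^ 2 * sinc ((m:ℝ) * h / 2) ^ 2 ≤ 1 := sq_mul_sinc_sq_le_one _
    have hfa : (0:ℝ) ≤ |f (m.natAbs ^ 2)| := abs_nonneg _
    have hs : (0:ℝ) ≤ sinc ((m:ℝ) * h / 2) ^ 2 := sq_nonneg _
    have hhsq : (0:ℝ) < h ^ 2 := by positivity
    have h2' : (m:ℝ) ^ 2 * sinc ((m:ℝ) * h / 2) ^ 2 ≤ 4 / h ^ 2 := by
      rw [le_div_iff₀ hhsq]
      nlinarith [h2]
    nlinarith [mul_le_mul_of_nonneg_left h1 hfa, mul_le_mul_of_nonneg_left h2' hfa]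
  have hcsum : Summable fun m : ℤ => ‖c m‖ :=
    Summable.of_nonneg_of_le (fun m => norm_nonneg _) hbound (hf.mul_left _)
  have hc : Summable c := hcsum.of_norm
  have hnC : (n:ℂ) ≠ 0 := by exact_mod_cast (Nat.cast_ne_zero (R := ℂ)).2 hn.ne'
  have hπC : (Real.pi : ℂ) ≠ 0 := by exact_mod_cast Complex.ofReal_ne_zero.2 hπ.ne'
  have h2πI : (2 * (Real.pi:ℂ) * Complex.I) ≠ 0 := by
    simp [Complex.I_ne_zero, hπC]
  -- geometric sum over electrodes
  have hS : ∀ m : ℤ, (∑ q : Fin n, Complex.exp (Complex.I * (k - m) * (θ q)))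
      = if (n:ℤ) ∣ (m - k) then (n:ℂ) else 0 := by
    intro m
    have hθq : ∀ q : Fin n, Complex.exp (Complex.I * ((k:ℂ) - m) * (θ q))
        = Complex.exp (2 * Real.pi * Complex.I * ((k:ℂ) - m) / n) ^ (q : ℕ) := by
      intro q
      rw [← Complex.exp_nat_mul]
      congr 1
      rw [hθ q]
      push_cast
      field_simp
    simp_rw [hθq]
    rw [Fin.sum_univ_eq_sum_range (fun i => Complex.exp (2 * Real.pi * Complex.I * ((k:ℂ) - m) / n) ^ i) n]
    by_cases hd : (n:ℤ) ∣ m - k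
    · obtain ⟨t, ht⟩ := hd
      have hz : Complex.exp (2 * Real.pi * Complex.I * ((k:ℂ) - m) / n) = 1 := by
        have harg : (2 * Real.pi * Complex.I * ((k:ℂ) - m) / n) = ((-t : ℤ) : ℂ) * (2 * Real.pi * Complex.I) := by
          have hzint : k - m = (-t) * (n:ℤ) := by linear_combination -ht
          have hkm : ((k:ℂ) - m) = ((-t : ℤ) : ℂ) * n := by
            exact_mod_cast congrArg (Int.cast : ℤ → ℂ) hzint
          rw [hkm]
          push_cast
          field_simp
        rw [harg, Complex.exp_int_mul_two_pi_mul_I]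
      rw [if_pos ⟨t, ht⟩]
      simp [hz]
    · rw [if_neg hd]
      have hz1 : Complex.exp (2 * Real.pi * Complex.I * ((k:ℂ) - m) / n) ≠ 1 := by
        intro hcon
        rw [Complex.exp_eq_one_iff] at hcon
        obtain ⟨t, ht⟩ := hcon
        apply hd
        have hC : ((k:ℂ) - m) = (t:ℂ) * n := by
          have h2 : (2 * (Real.pi:ℂ) * Complex.I) * ((k:ℂ) - m)
              = (2 * (Real.pi:ℂ) * Complex.I) * ((t:ℂ) * n) := by
            field_simp at ht
            linear_combination (2 * (Real.pi:ℂ) * Complex.I) * ht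
          exact mul_left_cancel₀ h2πI h2
        have hint : (k - m : ℤ) = t * n := by exact_mod_cast hC
        exact ⟨-t, by linear_combination -hint⟩
      have hzn : Complex.exp (2 * Real.pi * Complex.I * ((k:ℂ) - m) / n) ^ n = 1 := by
        rw [← Complex.exp_nat_mul]
        have harg : (n:ℂ) * (2 * Real.pi * Complex.I * ((k:ℂ) - m) / n) = ((k - m : ℤ) : ℂ) * (2 * Real.pi * Complex.I) := by
          push_cast
          field_simp
        rw [harg, Complex.exp_int_mul_two_pi_mul_I]
      rw [geom_sum_eq hz1, hzn]
      simp
  -- main eigen-equation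
  have main : M.mulVec v = ((1 / (h : ℂ)) * ∑' j : ℤ, c (k + n * j)) • v := by
    funext p
    have hFs : ∀ q : Fin n, Summable (fun m : ℤ =>
        Complex.exp (Complex.I * (m:ℂ) * ((θ p : ℂ) - (θ q : ℂ))) * c m *
          Complex.exp (Complex.I * (k:ℂ) * (θ q : ℂ))) := by
      intro q
      apply Summable.of_norm
      apply Summable.of_nonneg_of_le (fun _ => norm_nonneg _) _ hcsum
      intro m
      rw [norm_mul, norm_mul]
      have e1 : ‖Complex.exp (Complex.I * (m:ℂ) * ((θ p : ℂ) - (θ q : ℂ)))‖ = 1 := by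
        rw [Complex.norm_exp]
        have : (Complex.I * (m:ℂ) * ((θ p : ℂ) - (θ q : ℂ))).re = 0 := by simp
        rw [this, Real.exp_zero]
      have e2 : ‖Complex.exp (Complex.I * (k:ℂ) * (θ q : ℂ))‖ = 1 := by
        rw [Complex.norm_exp]
        have : (Complex.I * (k:ℂ) * (θ q : ℂ)).re = 0 := by simp
        rw [this, Real.exp_zero]
      rw [e1, e2, one_mul, mul_one]
    have hsum_q : ∀ m : ℤ, (∑ q : Fin n,
        Complex.exp (Complex.I * (m:ℂ) * ((θ p : ℂ) - (θ q : ℂ))) * c m *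
          Complex.exp (Complex.I * (k:ℂ) * (θ q : ℂ)))
        = c m * Complex.exp (Complex.I * (m:ℂ) * (θ p : ℂ)) *
            (if (n:ℤ) ∣ m - k then (n:ℂ) else 0) := by
      intro m
      rw [← hS m, Finset.mul_sum]
      refine Finset.sum_congr rfl fun q _ => ?_
      rw [show Complex.I * (m:ℂ) * ((θ p : ℂ) - (θ q : ℂ))
            = Complex.I * (m:ℂ) * (θ p : ℂ) + (-(Complex.I * (m:ℂ) * (θ q : ℂ))) from by ring,
        Complex.exp_add,
        show Complex.I * ((k:ℂ) - (m:ℂ)) * (θ q : ℂ)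
            = Complex.I * (k:ℂ) * (θ q : ℂ) + (-(Complex.I * (m:ℂ) * (θ q : ℂ))) from by ring,
        Complex.exp_add]
      ring
    have hexp_per : ∀ j : ℤ, Complex.exp (Complex.I * ((k + (n:ℤ) * j : ℤ) : ℂ) * (θ p : ℂ))
        = Complex.exp (Complex.I * (k:ℂ) * (θ p : ℂ)) := by
      intro j
      rw [show Complex.I * ((k + (n:ℤ) * j : ℤ) : ℂ) * (θ p : ℂ)
            = Complex.I * (k:ℂ) * (θ p : ℂ) + Complex.I * (((n:ℤ) * j : ℤ) : ℂ) * (θ p : ℂ) from by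
          push_cast; ring,
        Complex.exp_add]
      have : Complex.exp (Complex.I * (((n:ℤ) * j : ℤ) : ℂ) * (θ p : ℂ)) = 1 := by
        rw [hθ p]
        rw [show Complex.I * (((n:ℤ) * j : ℤ) : ℂ) * ((2 * Real.pi * ((p:ℕ):ℝ) / n : ℝ) : ℂ)
              = ((j * (p:ℕ) : ℤ) : ℂ) * (2 * Real.pi * Complex.I) from by
            push_cast; field_simp]
        exact Complex.exp_int_mul_two_pi_mul_I _
      rw [this, mul_one]
    have hhC : (1 / (2 * (Real.pi:ℂ))) * (n:ℂ) = 1 / (h:ℂ) := by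
      have : (h:ℂ) = 2 * (Real.pi:ℂ) / n := by rw [hh]; push_cast; ring
      rw [this]
      field_simp
    -- compute
    have lhs_eq : M.mulVec v p
        = (1 / (2 * (Real.pi:ℂ))) * ∑' m : ℤ, (∑ q : Fin n,
            Complex.exp (Complex.I * (m:ℂ) * ((θ p : ℂ) - (θ q : ℂ))) * c m *
              Complex.exp (Complex.I * (k:ℂ) * (θ q : ℂ))) := by
      rw [Summable.tsum_finsetSum (fun q _ => hFs q)]
      rw [hM, hv]
      simp only [Matrix.mulVec, dotProduct, Matrix.of_apply]
      rw [Finset.mul_sum]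
      refine Finset.sum_congr rfl fun q _ => ?_
      rw [mul_assoc, ← tsum_mul_right]
      congr 1
      refine tsum_congr fun m => ?_
      rw [hc_def]
      ring
    rw [lhs_eq]
    have rhs1 : ∑' m : ℤ, (∑ q : Fin n,
        Complex.exp (Complex.I * (m:ℂ) * ((θ p : ℂ) - (θ q : ℂ))) * c m *
          Complex.exp (Complex.I * (k:ℂ) * (θ q : ℂ)))
        = ∑' m : ℤ, (c m * Complex.exp (Complex.I * (m:ℂ) * (θ p : ℂ)) *
            (if (n:ℤ) ∣ m - k then (n:ℂ) else 0)) := tsum_congr hsum_q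
    rw [rhs1]
    set g : ℤ → ℂ := fun m => c m * Complex.exp (Complex.I * (m:ℂ) * (θ p : ℂ)) *
        (if (n:ℤ) ∣ m - k then (n:ℂ) else 0) with hg_def
    have hreindex : (∑' m : ℤ, g m) = ∑' j : ℤ, g (k + n * j) := by
      refine (Function.Injective.tsum_eq (g := fun j : ℤ => k + (n:ℤ) * j) ?_ ?_).symm
      · intro a b hab
        simp only at hab
        have hnZ : (n:ℤ) ≠ 0 := by exact_mod_cast hn.ne'
        have h2 : (n:ℤ) * a = (n:ℤ) * b := by linarith
        exact mul_left_cancel₀ hnZ h2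
      · intro m hm
        rw [hg_def] at hm
        simp only [Function.mem_support] at hm
        by_contra hcon
        apply hm
        have : ¬ (n:ℤ) ∣ m - k := by
          intro ⟨t, ht⟩
          exact hcon ⟨t, by linear_combination -ht⟩
        rw [if_neg this, mul_zero]
    rw [hreindex]
    have hgj : ∀ j : ℤ, g (k + (n:ℤ) * j)
        = c (k + (n:ℤ) * j) * (Complex.exp (Complex.I * (k:ℂ) * (θ p : ℂ)) * (n:ℂ)) := by
      intro j
      rw [hg_def]
      simp only
      rw [if_pos ⟨j, by ring⟩, hexp_per j]
      ring
    rw [tsum_congr hgj, tsum_mul_right]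
    rw [hv]
    simp only [Pi.smul_apply, smul_eq_mul]
    rw [← hhC]
    ring
  refine ⟨main, fun hvan => ?_⟩
  rw [main]
  have hone : (∑' j : ℤ, c (k + n * j)) = c k := by
    rw [tsum_eq_single 0 ?_]
    · norm_num
    · intro j hj
      have hjabs : (1:ℤ) ≤ |j| := by
        rcases lt_or_gt_of_ne hj with h1 | h1 <;> [exact le_abs.2 (Or.inr (by omega)); exact le_abs.2 (Or.inl (by omega))]
      have hbig : (n:ℤ) - 1 < 2 * |k + (n:ℤ) * j| := by
        have h1 : |(n:ℤ) * j| - |k| ≤ |k + (n:ℤ) * j| := by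
          have := abs_add_le (k + (n:ℤ) * j) (-k)
          simp at this
          simp only [abs_mul, Nat.abs_cast] at this ⊢
          omega
        have h2 : |(n:ℤ) * j| = (n:ℤ) * |j| := by
          rw [abs_mul, abs_of_nonneg (by positivity : (0:ℤ) ≤ (n:ℤ))]
        have hn1 : (1:ℤ) ≤ (n:ℤ) := by exact_mod_cast hn
        nlinarith [abs_nonneg k, abs_nonneg j]
      have := hvan (k + (n:ℤ) * j) hbig
      rw [hc_def]
      simp only
      rw [← Complex.ofReal_pow, ← Complex.ofReal_mul]
      exact_mod_cast congrArg (Complex.ofReal) this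
  rw [hone, hc_def]
  simp only
  funext p
  simp only [Pi.smul_apply, smul_eq_mul]
  rw [← Complex.ofReal_pow]
  push_cast
  ring
end
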